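/- Let (X,r) be a finite solution and V = ℂ^X, with R : V⊗V → V⊗V the linearization of r. Then R ∘ τ = Σ_{[x],[y]} (L_{[x]} ∘ p_{[y]}) ⊗ (R_{[y]} ∘ p_{[x]}), where τ is the flip v⊗w ↦ w⊗v, the sums range over ∼-classes, L_{[x]}, R_{[y]} are the linearized left and right actions (well-defined on classes), and p_{[x]} is the projection onto the span of the class [x]. -/

import Mathlib

/-- `r × id` on `X × X × X`. -/
def r1 {X : Type*} (r : X × X → X × X) : X × X × X → X × X × X :=
  fun p => ((r (p.1, p.2.1)).1, (r (p.1, p.2.1)).2, p.2.2)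

/-- `id × r` on `X × X × X`. -/
def r2 {X : Type*} (r : X × X → X × X) : X × X × X → X × X × X :=
  fun p => (p.1, r (p.2.1, p.2.2))

/-- The set-theoretic Yang–Baxter (braid) equation. -/
def IsYBE {X : Type*} (r : X × X → X × X) : Prop :=
  r1 r ∘ r2 r ∘ r1 r = r2 r ∘ r1 r ∘ r2 r

/-- Left translation `L_x`. -/
def Lmap {X : Type*} (r : X × X → X × X) (x y : X) : X := (r (x, y)).1

/-- Right translation `R_y`. -/
def Rmap {X : Type*} (r : X × X → X × X) (y x : X) : X := (r (x, y)).2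

/-- The retract setoid: `x ∼ y` iff `L_x = L_y` and `R_x = R_y`. -/
def retSetoid {X : Type*} (r : X × X → X × X) : Setoid X :=
  ⟨fun a b => Lmap r a = Lmap r b ∧ Rmap r a = Rmap r b,
    ⟨fun _ => ⟨rfl, rfl⟩, fun h => ⟨h.1.symm, h.2.symm⟩,
      fun h h' => ⟨h.1.trans h'.1, h.2.trans h'.2⟩⟩⟩

/-- The linear extension of `L_x` to `V = ℂ^X`, sending `e_y ↦ e_{L_x y}`. -/
noncomputable def Lop {X : Type*} (r : X × X → X × X) (x : X) :
    (X →₀ ℂ) →ₗ[ℂ] (X →₀ ℂ) :=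
  Finsupp.lmapDomain ℂ ℂ (Lmap r x)

/-- The linear extension of `R_y` to `V = ℂ^X`, sending `e_x ↦ e_{R_y x}`. -/
noncomputable def Rop {X : Type*} (r : X × X → X × X) (y : X) :
    (X →₀ ℂ) →ₗ[ℂ] (X →₀ ℂ) :=
  Finsupp.lmapDomain ℂ ℂ (Rmap r y)

open Classical in
/-- The projection onto the span of the `∼`-class of `z`. -/
noncomputable def pcl {X : Type*} [Fintype X] (r : X × X → X × X) (z : X) :
    (X →₀ ℂ) →ₗ[ℂ] (X →₀ ℂ) :=
  ∑ w : X, if (retSetoid r).r w z then Finsupp.lsingle w ∘ₗ Finsupp.lapply w else 0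

open TensorProduct in
/-- The linearization `R : V ⊗ V → V ⊗ V` of `r`, sending
`e_x ⊗ e_y ↦ e_{L_x y} ⊗ e_{R_y x}`. -/
noncomputable def Rlin {X : Type*} (r : X × X → X × X) :
    ((X →₀ ℂ) ⊗[ℂ] (X →₀ ℂ)) →ₗ[ℂ] ((X →₀ ℂ) ⊗[ℂ] (X →₀ ℂ)) :=
  (finsuppTensorFinsupp' ℂ X X).symm.toLinearMap ∘ₗ
    Finsupp.lmapDomain ℂ ℂ r ∘ₗ (finsuppTensorFinsupp' ℂ X X).toLinearMap

open Classical TensorProduct in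
theorem stmt13 {X : Type*} [Fintype X] (r : X × X → X × X) (h : IsYBE r) :
    Rlin r ∘ₗ (TensorProduct.comm ℂ (X →₀ ℂ) (X →₀ ℂ)).toLinearMap =
      ∑ c : Quotient (retSetoid r) × Quotient (retSetoid r),
        TensorProduct.map (Lop r c.1.out ∘ₗ pcl r c.2.out)
          (Rop r c.2.out ∘ₗ pcl r c.1.out) := by
  apply TensorProduct.ext
  apply Finsupp.lhom_ext
  intro x cx
  apply Finsupp.lhom_ext
  intro y cy
  have hpcl : ∀ (z w : X) (c : ℂ), pcl r z (Finsupp.single w c) =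
      if (retSetoid r).r w z then Finsupp.single w c else 0 := by
    intro z w c
    rw [pcl, LinearMap.sum_apply]
    rw [Finset.sum_eq_single w]
    · split <;> simp [Finsupp.lapply]
    · intro b _ hb
      split <;> simp [Finsupp.lapply, Finsupp.single_apply, Ne.symm hb]
    · simp
  simp only [LinearMap.compr₂ₛₗ_apply, TensorProduct.mk_apply, LinearMap.coe_comp,
    Function.comp_apply, LinearEquiv.coe_coe, TensorProduct.comm_tmul, Rlin,
    finsuppTensorFinsupp'_single_tmul_single, Finsupp.lmapDomain_apply,
    Finsupp.mapDomain_single, finsuppTensorFinsupp'_symm_single_mul,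
    LinearMap.sum_apply, TensorProduct.map_tmul, hpcl]
  letI := retSetoid r
  rw [Finset.sum_eq_single (⟦y⟧, ⟦x⟧)]
  · have h1 : (retSetoid r).r x (Quotient.out ⟦x⟧) := Setoid.symm (Quotient.mk_out x)
    have h2 : (retSetoid r).r y (Quotient.out ⟦y⟧) := Setoid.symm (Quotient.mk_out y)
    rw [if_pos h1, if_pos h2]
    simp only [Lop, Rop, Finsupp.lmapDomain_apply, Finsupp.mapDomain_single]
    rw [← h2.1, ← h1.2]
    have key : ∀ (a b : X) (c d : ℂ), (Finsupp.single a c) ⊗ₜ[ℂ] (Finsupp.single b d)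
        = (c * d) • ((Finsupp.single a (1:ℂ)) ⊗ₜ[ℂ] (Finsupp.single b (1:ℂ))) := by
      intro a b c d
      rw [TensorProduct.smul_tmul', Finsupp.smul_single', mul_one,
        show (Finsupp.single b d) = d • Finsupp.single b (1:ℂ) by
          rw [Finsupp.smul_single', mul_one],
        ← TensorProduct.smul_tmul, Finsupp.smul_single', mul_comm d c]
    rw [key _ _ cy cx, key _ _ cx cy, mul_comm]
    rfl
  · intro b _ hb
    by_cases hx : (retSetoid r) x b.2.out
    · by_cases hy : (retSetoid r) y b.1.out
      · exfalso
        apply hb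
        have : (⟦y⟧ : Quotient (retSetoid r)) = b.1 := by
          rw [Quotient.sound hy, Quotient.out_eq]
        have hx' : (⟦x⟧ : Quotient (retSetoid r)) = b.2 := by
          rw [Quotient.sound hx, Quotient.out_eq]
        exact Prod.ext this.symm hx'.symm
      · rw [if_neg hy]
        simp
    · rw [if_neg hx]
      simp
  · simp
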